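/- Let $(X,\mu)$ be a non-atomic probability space, $T:X\to X$ an ergodic invertible measure preserving map, and $p_1,p_2>0$ with $1/p=1/p_1+1/p_2$. Suppose the maximal inequality $\|\sup_{N\in\mathbb{N}}|A_{N;X}(f,g)|\|_{L^p(X)} \le C\|f\|_{L^{p_1}(X)}\|g\|_{L^{p_2}(X)}$ holds for all $f\in L^{p_1}(X)$ and $g\in L^{p_2}(X)$, and suppose moreover that for every measurable set $A$ the averages $\frac{1}{N}\sum_{n=1}^N 1_A(T^{\lfloor\sqrt n\rfloor}x)1_A(T^n x)$ converge to $\mu(A)^2$ almost everywhere. Then $p\ge 1/2$. -/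

import Mathlib

open MeasureTheory Filter
open scoped ENNReal

/-- From non-atomicity: sets of arbitrarily small positive measure. -/
lemma stmt16_small {X : Type*} [MeasurableSpace X] (μ : Measure X) [IsProbabilityMeasure μ]
    (hna : ∀ A : Set X, MeasurableSet A → 0 < μ A →
      ∃ B ⊆ A, MeasurableSet B ∧ 0 < μ B ∧ μ B < μ A) :
    ∀ n : ℕ, ∃ A : Set X, MeasurableSet A ∧ 0 < μ A ∧ (μ A).toReal ≤ (1/2) ^ n := by
  intro n
  induction n with
  | zero =>
    exact ⟨Set.univ, MeasurableSet.univ, by simp, by simp⟩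
  | succ n ih =>
    obtain ⟨A, hA, hApos, hAle⟩ := ih
    obtain ⟨B, hBA, hB, hBpos, hBlt⟩ := hna A hA hApos
    have hAfin : μ A ≠ ⊤ := measure_ne_top μ A
    have hBfin : μ B ≠ ⊤ := measure_ne_top μ B
    have hdiff : μ (A \ B) = μ A - μ B := measure_diff hBA hB.nullMeasurableSet hBfin
    have hdiffR : (μ (A \ B)).toReal = (μ A).toReal - (μ B).toReal := by
      rw [hdiff]; exact ENNReal.toReal_sub_of_le hBlt.le hAfin
    have hBR : 0 < (μ B).toReal := ENNReal.toReal_pos hBpos.ne' hBfin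
    have hltR : (μ B).toReal < (μ A).toReal := by
      exact ENNReal.toReal_lt_toReal hBfin hAfin |>.mpr hBlt
    by_cases hcase : (μ B).toReal ≤ (μ A).toReal / 2
    · refine ⟨B, hB, hBpos, ?_⟩
      calc (μ B).toReal ≤ (μ A).toReal / 2 := hcase
        _ ≤ (1/2)^n / 2 := by linarith
        _ = (1/2)^(n+1) := by ring
    · push_neg at hcase
      refine ⟨A \ B, hA.diff hB, ?_, ?_⟩
      · have : 0 < (μ (A \ B)).toReal := by rw [hdiffR]; linarith
        exact (ENNReal.toReal_pos_iff.mp this).1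
      · rw [hdiffR]
        calc (μ A).toReal - (μ B).toReal ≤ (μ A).toReal / 2 := by linarith
          _ ≤ (1/2)^n / 2 := by linarith
          _ = (1/2)^(n+1) := by ring

theorem stmt16 {X : Type*} [MeasurableSpace X] (μ : Measure X) [IsProbabilityMeasure μ]
    -- `μ` is non-atomic
    (hna : ∀ A : Set X, MeasurableSet A → 0 < μ A →
      ∃ B ⊆ A, MeasurableSet B ∧ 0 < μ B ∧ μ B < μ A)
    -- `T` is an invertible bi-measurable measure preserving ergodic map
    (T : X → X) (hTmp : MeasurePreserving T μ μ)
    (hTinv : ∃ S : X → X, Measurable S ∧ Function.LeftInverse S T ∧ Function.RightInverse S T)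
    (hErg : Ergodic T μ)
    (p1 p2 p : ℝ) (hp1 : 0 < p1) (hp2 : 0 < p2) (hp : p⁻¹ = p1⁻¹ + p2⁻¹)
    (C : ℝ) (hC : 0 < C)
    -- the maximal inequality
    (hMax : ∀ f g : X → ℂ, MemLp f (ENNReal.ofReal p1) μ → MemLp g (ENNReal.ofReal p2) μ →
      (∫⁻ x, (⨆ N : ℕ, ⨆ _ : 1 ≤ N,
          (‖(N : ℂ)⁻¹ * ∑ n ∈ Finset.Icc 1 N, f (T^[Nat.sqrt n] x) * g (T^[n] x)‖₊
            : ℝ≥0∞)) ^ p ∂μ) ^ p⁻¹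
        ≤ ENNReal.ofReal C * eLpNorm f (ENNReal.ofReal p1) μ *
            eLpNorm g (ENNReal.ofReal p2) μ)
    -- pointwise a.e. convergence of the averages of indicators to `μ(A)²`
    (hConv : ∀ A : Set X, MeasurableSet A → ∀ᵐ x ∂μ,
      Tendsto (fun N : ℕ => (N : ℝ)⁻¹ * ∑ n ∈ Finset.Icc 1 N,
          (A.indicator (fun _ => (1 : ℝ)) (T^[Nat.sqrt n] x)) *
            (A.indicator (fun _ => (1 : ℝ)) (T^[n] x)))
        atTop (nhds ((μ A).toReal ^ 2))) :
    (1 : ℝ) / 2 ≤ p := by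
  have hpinv : 0 < p⁻¹ := by rw [hp]; positivity
  have hppos : 0 < p := inv_pos.mp hpinv
  by_contra hcon
  push_neg at hcon
  have h2lt : 2 < p⁻¹ := by
    nlinarith [mul_inv_cancel₀ hppos.ne', mul_pos (by linarith : (0:ℝ) < 1/2 - p) hpinv]
  set q : ℝ := p⁻¹ - 2 with hqdef
  have hq : 0 < q := by simp [hqdef]; linarith
  -- Key inequality for any measurable set of positive measure
  have key : ∀ A : Set X, MeasurableSet A → 0 < μ A →
      (μ A).toReal ^ 2 ≤ C * (μ A).toReal ^ p⁻¹ := by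
    intro A hA hApos
    set a : ℝ := (μ A).toReal with hadef
    have hAfin : μ A ≠ ⊤ := measure_ne_top μ A
    have hapos : 0 < a := ENNReal.toReal_pos hApos.ne' hAfin
    have haa : μ A = ENNReal.ofReal a := (ENNReal.ofReal_toReal hAfin).symm
    set f : X → ℂ := A.indicator (fun _ => (1 : ℂ)) with hfdef
    have hf1 : MemLp f (ENNReal.ofReal p1) μ :=
      memLp_indicator_const _ hA 1 (Or.inr hAfin)
    have hf2 : MemLp f (ENNReal.ofReal p2) μ :=
      memLp_indicator_const _ hA 1 (Or.inr hAfin)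
    have hmax := hMax f f hf1 hf2
    -- rewrite the eLpNorms
    have hsn : ∀ r : ℝ, 0 < r → eLpNorm f (ENNReal.ofReal r) μ = μ A ^ r⁻¹ := by
      intro r hr
      rw [hfdef, eLpNorm_indicator_const hA (by simp [ENNReal.ofReal_pos.mpr hr, ne_of_gt])
        ENNReal.ofReal_ne_top]
      simp [ENNReal.toReal_ofReal hr.le, one_div]
    -- a.e. lower bound on the maximal function
    have hmain : ∀ᵐ x ∂μ, ENNReal.ofReal (a ^ 2) ≤ ⨆ N : ℕ, ⨆ _ : 1 ≤ N,
        (‖(N : ℂ)⁻¹ * ∑ n ∈ Finset.Icc 1 N, f (T^[Nat.sqrt n] x) * f (T^[n] x)‖₊ : ℝ≥0∞) := by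
      filter_upwards [hConv A hA] with x hx
      set avgR : ℕ → ℝ := fun N => (N : ℝ)⁻¹ * ∑ n ∈ Finset.Icc 1 N,
          (A.indicator (fun _ => (1 : ℝ)) (T^[Nat.sqrt n] x)) *
            (A.indicator (fun _ => (1 : ℝ)) (T^[n] x)) with havg
      have h1 : Tendsto (fun N => ENNReal.ofReal (avgR N)) atTop
          (nhds (ENNReal.ofReal (a ^ 2))) :=
        (ENNReal.continuous_ofReal.tendsto _).comp hx
      refine le_of_tendsto h1 ?_
      filter_upwards [eventually_ge_atTop 1] with N hN
      have hcast : ((N : ℂ)⁻¹ * ∑ n ∈ Finset.Icc 1 N, f (T^[Nat.sqrt n] x) * f (T^[n] x))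
          = ((avgR N : ℝ) : ℂ) := by
        have hind : ∀ y : X, f y = ((A.indicator (fun _ => (1 : ℝ)) y : ℝ) : ℂ) := by
          intro y
          by_cases h : y ∈ A <;> simp [hfdef, h]
        simp only [havg]
        push_cast
        congr 1
        refine Finset.sum_congr rfl fun n _ => ?_
        rw [hind, hind]
      calc ENNReal.ofReal (avgR N) ≤ (‖avgR N‖₊ : ℝ≥0∞) := Real.ofReal_le_enorm _
        _ = (‖(N : ℂ)⁻¹ * ∑ n ∈ Finset.Icc 1 N, f (T^[Nat.sqrt n] x) * f (T^[n] x)‖₊ : ℝ≥0∞) := by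
            rw [hcast]; simp
        _ ≤ _ := le_iSup₂ (f := fun (N : ℕ) (_ : 1 ≤ N) =>
              (‖(N : ℂ)⁻¹ * ∑ n ∈ Finset.Icc 1 N, f (T^[Nat.sqrt n] x) * f (T^[n] x)‖₊
                : ℝ≥0∞)) N hN
    -- integrate the lower bound
    have hint : ENNReal.ofReal (a ^ 2) ≤ (∫⁻ x, (⨆ N : ℕ, ⨆ _ : 1 ≤ N,
        (‖(N : ℂ)⁻¹ * ∑ n ∈ Finset.Icc 1 N, f (T^[Nat.sqrt n] x) * f (T^[n] x)‖₊
          : ℝ≥0∞)) ^ p ∂μ) ^ p⁻¹ := by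
      have h2 : (ENNReal.ofReal (a ^ 2)) ^ p ≤ ∫⁻ x, (⨆ N : ℕ, ⨆ _ : 1 ≤ N,
          (‖(N : ℂ)⁻¹ * ∑ n ∈ Finset.Icc 1 N, f (T^[Nat.sqrt n] x) * f (T^[n] x)‖₊
            : ℝ≥0∞)) ^ p ∂μ := by
        have : ((ENNReal.ofReal (a ^ 2)) ^ p) = ∫⁻ _, (ENNReal.ofReal (a ^ 2)) ^ p ∂μ := by
          simp
        rw [this]
        exact lintegral_mono_ae (hmain.mono fun x hx => ENNReal.rpow_le_rpow hx hppos.le)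
      calc ENNReal.ofReal (a ^ 2) = ((ENNReal.ofReal (a ^ 2)) ^ p) ^ p⁻¹ := by
            rw [← ENNReal.rpow_mul, mul_inv_cancel₀ hppos.ne', ENNReal.rpow_one]
        _ ≤ _ := ENNReal.rpow_le_rpow h2 (inv_nonneg.mpr hppos.le)
    -- combine
    have hcomb : ENNReal.ofReal (a ^ 2) ≤ ENNReal.ofReal (C * a ^ p⁻¹) := by
      refine le_trans (le_trans hint hmax) ?_
      rw [hsn p1 hp1, hsn p2 hp2, mul_assoc, ← ENNReal.rpow_add _ _ hApos.ne' hAfin, ← hp,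
        haa, ENNReal.ofReal_rpow_of_pos hapos, ← ENNReal.ofReal_mul hC.le]
    have := (ENNReal.ofReal_le_ofReal_iff (by positivity)).mp hcomb
    exact this
  -- choose a small set to get a contradiction
  set r : ℝ := (1/2 : ℝ) ^ q with hrdef
  have hr0 : 0 ≤ r := Real.rpow_nonneg (by norm_num) _
  have hr1 : r < 1 := Real.rpow_lt_one (by norm_num) (by norm_num) hq
  have htend : Tendsto (fun n : ℕ => C * r ^ n) atTop (nhds 0) := by
    simpa using (tendsto_pow_atTop_nhds_zero_of_lt_one hr0 hr1).const_mul C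
  obtain ⟨n, hn⟩ := (htend.eventually (gt_mem_nhds (by norm_num : (0:ℝ) < 1))).exists
  obtain ⟨A, hA, hApos, hAle⟩ := stmt16_small μ hna n
  set a : ℝ := (μ A).toReal with hadef
  have hapos : 0 < a := ENNReal.toReal_pos hApos.ne' (measure_ne_top μ A)
  have hkey := key A hA hApos
  have hsplit : a ^ p⁻¹ = a ^ 2 * a ^ q := by
    rw [← Real.rpow_natCast a 2, ← Real.rpow_add hapos]
    congr 1
    simp [hqdef]
  have h1le : 1 ≤ C * a ^ q := by
    have h := hkey
    rw [hsplit] at h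
    have := le_of_mul_le_mul_right (by linarith [h] : 1 * a ^ 2 ≤ (C * a ^ q) * a ^ 2)
      (by positivity : (0:ℝ) < a ^ 2)
    linarith
  have haq : a ^ q ≤ r ^ n := by
    calc a ^ q ≤ ((1/2 : ℝ) ^ n) ^ q := Real.rpow_le_rpow hapos.le hAle hq.le
      _ = r ^ n := by
          rw [← Real.rpow_natCast (1/2 : ℝ) n, ← Real.rpow_mul (by norm_num), mul_comm,
            Real.rpow_mul (by norm_num), Real.rpow_natCast]
  have : (1 : ℝ) < 1 := lt_of_le_of_lt
    (h1le.trans (mul_le_mul_of_nonneg_left haq hC.le)) hn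
  exact absurd this (lt_irrefl 1)
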